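/- Let A : [0,1]² → ℝ be continuous, m = max_{ν∈M}∫Adν, and u : [0,1] → ℝ continuous with u(x) ≥ A(x,y) + u(y) − m for all x,y (backward subaction). Then for every x in the non-wandering set Ω(A), max_y { u(y) − u(x) + A(x,y) } = m. -/

import Mathlib

open MeasureTheory unitInterval

/-- x is non-wandering for A (with maximal ergodic value m) -/
def nonWandering (A : ℝ → ℝ → ℝ) (m x : ℝ) : Prop :=
  x ∈ Set.Icc (0:ℝ) 1 ∧ ∀ ε > 0, ∃ k : ℕ, 2 ≤ k ∧ ∃ p : ℕ → ℝ,
    p 0 = x ∧ p (k - 1) = x ∧ (∀ i < k, p i ∈ Set.Icc (0:ℝ) 1) ∧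
    |∑ i ∈ Finset.range (k - 1), (A (p i) (p (i + 1)) - m)| < ε

/-- for every backward subaction u and every x in the non-wandering set
Ω(A), max_y { u(y) - u(x) + A(x,y) } = m. -/
theorem stmt18 (A : ℝ → ℝ → ℝ)
    (hAc : ContinuousOn (fun p : ℝ × ℝ => A p.1 p.2) (Set.Icc 0 1 ×ˢ Set.Icc 0 1))
    (m : ℝ)
    (hm : IsGreatest {r : ℝ | ∃ ν : ProbabilityMeasure (I × I),
        (∀ f : C(I, ℝ), ∫ p, (f p.1 - f p.2) ∂(ν : Measure (I × I)) = 0) ∧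
        r = ∫ p, A p.1 p.2 ∂(ν : Measure (I × I))} m)
    (u : ℝ → ℝ) (hu : ContinuousOn u (Set.Icc 0 1))
    (hsub : ∀ x ∈ Set.Icc (0:ℝ) 1, ∀ y ∈ Set.Icc (0:ℝ) 1, u x ≥ A x y + u y - m) :
    ∀ x : ℝ, nonWandering A m x →
      IsGreatest {r : ℝ | ∃ y ∈ Set.Icc (0:ℝ) 1, r = u y - u x + A x y} m := by

  intro x hx
  obtain ⟨hx01, hcyc⟩ := hx
  have hfc : ContinuousOn (fun y => u y - u x + A x y) (Set.Icc 0 1) := by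
    apply ContinuousOn.add (hu.sub continuousOn_const)
    exact hAc.comp (Continuous.continuousOn (continuous_const.prodMk continuous_id))
      (fun y hy => Set.mk_mem_prod hx01 hy)
  obtain ⟨y₀, hy₀, hmax⟩ := isCompact_Icc.exists_isMaxOn (Set.nonempty_Icc.2 zero_le_one) hfc
  have hub : ∀ r ∈ {r : ℝ | ∃ y ∈ Set.Icc (0:ℝ) 1, r = u y - u x + A x y}, r ≤ m := by
    rintro r ⟨y, hy, rfl⟩
    have := hsub x hx01 y hy
    linarith
  have hle : u y₀ - u x + A x y₀ ≤ m := hub _ ⟨y₀, hy₀, rfl⟩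
  have hge : m ≤ u y₀ - u x + A x y₀ := by
    by_contra h
    push_neg at h
    obtain ⟨k, hk, p, hp0, hpk, hpI, hsum⟩ := hcyc (m - (u y₀ - u x + A x y₀)) (by linarith)
    set ε := m - (u y₀ - u x + A x y₀) with hε
    have hd : ∀ i < k - 1, 0 ≤ (u (p i) - u (p (i+1))) - (A (p i) (p (i+1)) - m) := by
      intro i hi
      have h1 : p i ∈ Set.Icc (0:ℝ) 1 := hpI i (by omega)
      have h2 : p (i+1) ∈ Set.Icc (0:ℝ) 1 := hpI (i+1) (by omega)
      have := hsub (p i) h1 (p (i+1)) h2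
      linarith
    have htel : ∑ i ∈ Finset.range (k-1), (u (p i) - u (p (i+1))) = 0 := by
      rw [Finset.sum_range_sub' (fun i => u (p i))]
      rw [hp0, hpk]
      ring
    have hsd : ∑ i ∈ Finset.range (k-1),
        ((u (p i) - u (p (i+1))) - (A (p i) (p (i+1)) - m)) < ε := by
      rw [Finset.sum_sub_distrib, htel]
      have := abs_lt.mp hsum
      linarith
    have h0 : (u (p 0) - u (p 1)) - (A (p 0) (p 1) - m) < ε := by
      have hmem : (0:ℕ) ∈ Finset.range (k-1) := Finset.mem_range.2 (by omega)
      have := Finset.single_le_sum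
        (f := fun i => (u (p i) - u (p (i+1))) - (A (p i) (p (i+1)) - m))
        (fun i hi => hd i (Finset.mem_range.1 hi)) hmem
      exact lt_of_le_of_lt this hsd
    have h1I : p 1 ∈ Set.Icc (0:ℝ) 1 := hpI 1 (by omega)
    rw [hp0] at h0
    have hm1 : u (p 1) - u x + A x (p 1) ≤ u y₀ - u x + A x y₀ := hmax h1I
    simp only [hε] at h0
    linarith
  exact ⟨⟨y₀, hy₀, (le_antisymm hle hge).symm⟩, hub⟩
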